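/- Let G be a finite group of order ℓ, let 2 ≤ q ≤ e_ℓ, and let Y be a topological space. Then the G-action on Map_q(G,Y) given by (g•φ)(h) = φ(g⁻¹h) is free: if g•φ = φ for some φ ∈ Map_q(G,Y) and g ∈ G, then g = 1. -/
import Mathlib


/-- `Map_q(G,Y)`: functions `G → Y` that are non-constant on every `q`-element subset of `G`. -/
def MapQ (G Y : Type*) (q : ℕ) : Set (G → Y) :=
  {φ | ∀ S : Finset G, S.card = q → ¬∃ y : Y, ∀ g ∈ S, φ g = y}

theorem MapQ.smul_mem {G Y : Type*} [Group G] {q : ℕ} (g : G) {φ : G → Y}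
    (hφ : φ ∈ MapQ G Y q) : (fun h => φ (g⁻¹ * h)) ∈ MapQ G Y q := by
  classical
  rintro S hS ⟨y, hy⟩
  refine hφ (S.image (fun h => g⁻¹ * h)) ?_ ⟨y, ?_⟩
  · rwa [Finset.card_image_of_injective _ (mul_right_injective g⁻¹)]
  · rintro a ha
    obtain ⟨b, hb, rfl⟩ := Finset.mem_image.mp ha
    exact hy b hb

/-- The left `G`-action on `Map_q(G,Y)` given by `(g • φ) h = φ (g⁻¹ * h)`. -/
instance MapQ.instSMul {G Y : Type*} [Group G] {q : ℕ} : SMul G (MapQ G Y q) :=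
  ⟨fun g φ => ⟨fun h => (φ : G → Y) (g⁻¹ * h), MapQ.smul_mem g φ.2⟩⟩

instance MapQ.instMulAction {G Y : Type*} [Group G] {q : ℕ} :
    MulAction G (MapQ G Y q) where
  one_smul φ := Subtype.ext <| funext fun h => by
    show (φ : G → Y) ((1 : G)⁻¹ * h) = (φ : G → Y) h
    rw [inv_one, one_mul]
  mul_smul g k φ := Subtype.ext <| funext fun h => by
    show (φ : G → Y) ((g * k)⁻¹ * h) = (φ : G → Y) (k⁻¹ * (g⁻¹ * h))
    rw [mul_inv_rev, mul_assoc]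

/-- The sectional category of a map: the least `n` such that the base admits a cover by `n`
open sets, each admitting a continuous local section; `∞` if no such finite cover exists. -/
noncomputable def secat {E B : Type*} [TopologicalSpace E] [TopologicalSpace B]
    (p : E → B) : ℕ∞ :=
  ⨅ (n : ℕ) (_ : ∃ U : Fin n → Set B, (∀ i, IsOpen (U i)) ∧ (⋃ i, U i) = Set.univ ∧
      ∀ i, ∃ s : C(U i, E), ∀ b : U i, p (s b) = (b : B)), (n : ℕ∞)

/-- The triple `(X,G;Y)` satisfies the `q`-th Borsuk-Ulam property. -/
def BorsukUlam (G : Type*) [Group G] (X Y : Type*) [TopologicalSpace X] [TopologicalSpace Y]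
    [MulAction G X] (q : ℕ) : Prop :=
  ∀ f : C(X, Y), ∃ (x : X) (S : Finset G), S.card = q ∧ ∃ y : Y, ∀ g ∈ S, f (g • x) = y

/-- The `q`-th index of `(X,G)`: the least `k` such that there is a continuous `G`-equivariant
map `X → Map_q(G, ℝ^{k+1})`; `∞` if no such `k` exists. -/
noncomputable def indexQ (G : Type*) [Group G] (X : Type*) [TopologicalSpace X]
    [MulAction G X] (q : ℕ) : ℕ∞ :=
  ⨅ (k : ℕ) (_ : ∃ Φ : C(X, MapQ G (Fin (k + 1) → ℝ) q),
      ∀ (g : G) (x : X), Φ (g • x) = g • Φ x), (k : ℕ∞)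

/-- For `2 ≤ q ≤ e_ℓ` (the least prime divisor of `ℓ = |G|`), the `G`-action on
`Map_q(G,Y)` given by `(g • φ) h = φ (g⁻¹ h)` is free. -/
theorem statement_1 {G : Type*} [Group G] [Fintype G] {Y : Type*} [TopologicalSpace Y]
    {q : ℕ} (hq2 : 2 ≤ q) (hq : q ≤ (Fintype.card G).minFac)
    (φ : MapQ G Y q) (g : G) (hgφ : g • φ = φ) : g = 1 := by
  classical
  by_contra hg
  have key : ∀ h : G, (φ : G → Y) (g⁻¹ * h) = (φ : G → Y) h := fun h =>
    congrFun (congrArg Subtype.val hgφ) h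
  have pow : ∀ i : ℕ, (φ : G → Y) (g⁻¹ ^ i) = (φ : G → Y) 1 := by
    intro i
    induction i with
    | zero => simp
    | succ n ih => rw [pow_succ', key (g⁻¹ ^ n)]; exact ih
  have hord : q ≤ orderOf g⁻¹ := by
    rw [orderOf_inv]
    refine hq.trans (Nat.minFac_le_of_dvd ?_ (orderOf_dvd_card))
    have h1 : orderOf g ≠ 1 := fun h => hg (orderOf_eq_one_iff.mp h)
    have h0 : orderOf g ≠ 0 := (orderOf_pos g).ne'
    omega
  refine φ.2 ((Finset.range q).image (fun i => g⁻¹ ^ i)) ?_ ⟨(φ : G → Y) 1, ?_⟩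
  · rw [Finset.card_image_of_injOn, Finset.card_range]
    intro a ha b hb hab
    exact pow_injOn_Iio_orderOf (by simpa using (Finset.mem_range.mp ha).trans_le hord)
      (by simpa using (Finset.mem_range.mp hb).trans_le hord) hab
  · rintro a ha
    obtain ⟨i, _, rfl⟩ := Finset.mem_image.mp ha
    exact pow i
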